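/- Let K be a self-similar compact set of module μ and ratio ρ, with T_u := K^(u) \ K^(u+1). Then for every ordinal α < ω^ω and every u ≥ 0, the sequence T_u[ωα + n] converges to T_{u+1}[α] as n → ∞; in particular, for u = μ−1, T_{μ−1}[ωα + n] converges to T_0[α]/ρ. -/

import Mathlib

open Ordinal Filter Topology Set

/-- The `n`-th derived set of `A ⊆ ℝ`. -/
noncomputable def iterDeriv (A : Set ℝ) (n : ℕ) : Set ℝ := (derivedSet (X := ℝ))^[n] A

/-- The ordinal `ω ^ ω`. -/
noncomputable def wOmega : Ordinal.{0} := Ordinal.omega0 ^ Ordinal.omega0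

/-- An enumeration of `K ⊆ ℝ` witnessing that `K`, with the reverse of the usual order,
is well-ordered with order type `ω ^ ω + 1`: its elements are exactly `e α` for
`α ≤ ω ^ ω`, and the enumeration is strictly order-reversing. `e α` is the element
written `K[α]`. -/
structure OrdEnum (K : Set ℝ) where
  e : Ordinal.{0} → ℝ
  mem : ∀ α ≤ wOmega, e α ∈ K
  surj : ∀ x ∈ K, ∃ α ≤ wOmega, e α = x
  anti : ∀ ⦃α β : Ordinal.{0}⦄, α ≤ wOmega → β ≤ wOmega → (α < β ↔ e β < e α)

/-- An enumeration of a set `S ⊆ ℝ` of reverse-order type `ω ^ ω` (indices `α < ω ^ ω`),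
strictly order-reversing; `e α` is the element written `S[α]`. -/
structure SubEnum (S : Set ℝ) where
  e : Ordinal.{0} → ℝ
  mem : ∀ α < wOmega, e α ∈ S
  surj : ∀ x ∈ S, ∃ α < wOmega, e α = x
  anti : ∀ ⦃α β : Ordinal.{0}⦄, α < wOmega → β < wOmega → (α < β ↔ e β < e α)

/-- A self-similar compact set of ratio `ρ > 1` and module `μ ≥ 1`:
a compact `K ⊆ [0, ∞)`, well-ordered by the reverse usual order with order
type `ω ^ ω + 1`, satisfying `ρ • K^(μ) = K`. -/
def SelfSimilar (K : Set ℝ) (ρ : ℝ) (μ : ℕ) : Prop :=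
  IsCompact K ∧ K ⊆ Set.Ici 0 ∧ 1 < ρ ∧ 1 ≤ μ ∧
    (fun x => ρ * x) '' iterDeriv K μ = K ∧ Nonempty (OrdEnum K)

namespace SSP
open Ordinal

variable {K : Set ℝ} (hK : IsCompact K) (hK0 : K ⊆ Set.Ici 0) (E : OrdEnum K)

lemma E_le {α β : Ordinal} (h : α ≤ β) (hβ : β ≤ wOmega) : E.e β ≤ E.e α := by
  rcases eq_or_lt_of_le h with rfl | h'
  · exact le_rfl
  · exact ((E.anti (h.trans hβ) hβ).1 h').le

lemma E_inj {α β : Ordinal} (hα : α ≤ wOmega) (hβ : β ≤ wOmega) (h : E.e α = E.e β) :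
    α = β := by
  rcases lt_trichotomy α β with h' | h' | h'
  · exact absurd h (((E.anti hα hβ).1 h').ne').elim
  · exact h'
  · exact absurd h (((E.anti hβ hα).1 h').ne).elim

lemma K_eq : K = E.e '' Set.Iic wOmega := by
  apply Set.Subset.antisymm
  · intro x hx
    obtain ⟨α, hα, rfl⟩ := E.surj x hx
    exact ⟨α, hα, rfl⟩
  · rintro x ⟨α, hα, rfl⟩
    exact E.mem α hα

include hK hK0 in
lemma exists_lt_add {D : Set Ordinal.{0}} (hD : D ⊆ Set.Iic wOmega) {l : Ordinal}
    (hl : l ≤ wOmega) (hl0 : 0 < l)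
    (hcof : ∀ b < l, ∃ β ∈ D, b < β ∧ β < l) {ε : ℝ} (hε : 0 < ε) :
    ∃ β ∈ D, β < l ∧ E.e β < E.e l + ε := by
  set s : Set ℝ := E.e '' (D ∩ Set.Iio l) with hs
  have hsne : s.Nonempty := by
    obtain ⟨β, hβD, hβ0, hβl⟩ := hcof 0 hl0
    exact ⟨E.e β, ⟨β, ⟨hβD, hβl⟩, rfl⟩⟩
  have hsK : s ⊆ K := by
    rintro x ⟨β, ⟨hβD, _⟩, rfl⟩
    exact E.mem β (hD hβD)
  have hbdd : BddBelow s := ⟨0, fun x hx => hK0 (hsK hx)⟩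
  have hLK : sInf s ∈ K := by
    have := csInf_mem_closure hsne hbdd
    exact hK.isClosed.closure_subset_iff.2 hsK this
  obtain ⟨γ, hγ, hγe⟩ := E.surj _ hLK
  have hlγ : l ≤ γ := by
    refine le_of_forall_lt fun b hb => ?_
    obtain ⟨β, hβD, hbβ, hβl⟩ := hcof b hb
    have h1 : E.e γ ≤ E.e β := by
      rw [hγe]; exact csInf_le hbdd ⟨β, ⟨hβD, hβl⟩, rfl⟩
    have : ¬ γ < β := fun hc => absurd ((E.anti hγ (hD hβD)).1 hc) (not_lt.2 h1)
    exact lt_of_lt_of_le hbβ (not_lt.1 this)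
  have h2 : E.e l ≤ sInf s := by
    apply le_csInf hsne
    rintro x ⟨β, ⟨hβD, hβl⟩, rfl⟩
    exact E_le E hβl.le hl
  have h3 : sInf s ≤ E.e l := hγe ▸ E_le E hlγ hγ
  have : sInf s < E.e l + ε := lt_of_le_of_lt h3 (by linarith)
  obtain ⟨x, hx, hxlt⟩ := exists_lt_of_csInf_lt hsne this
  obtain ⟨β, ⟨hβD, hβl⟩, rfl⟩ := hx
  exact ⟨β, hβD, hβl, hxlt⟩

include hK hK0 in
lemma mem_derivedSet_of_cof {D : Set Ordinal.{0}} (hD : D ⊆ Set.Iic wOmega) {l : Ordinal}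
    (hl : l ≤ wOmega) (hl0 : 0 < l)
    (hcof : ∀ b < l, ∃ β ∈ D, b < β ∧ β < l) :
    E.e l ∈ derivedSet (E.e '' D) := by
  rw [mem_derivedSet, accPt_iff_nhds]
  intro U hU
  obtain ⟨ε, hε, hball⟩ := Metric.mem_nhds_iff.1 hU
  obtain ⟨β, hβD, hβl, hβe⟩ := exists_lt_add hK hK0 E hD hl hl0 hcof hε
  have h1 : E.e l < E.e β := (E.anti (hβl.le.trans hl) hl).1 hβl
  refine ⟨E.e β, ⟨hball ?_, ⟨β, hβD, rfl⟩⟩, h1.ne'⟩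
  rw [Metric.mem_ball, Real.dist_eq, abs_lt]
  constructor <;> linarith

include hK hK0 in
omit hK hK0 in
lemma not_mem_derivedSet {D : Set Ordinal.{0}} (hD : D ⊆ Set.Iic wOmega) {α : Ordinal}
    (hα : α ∈ D) {c : ℝ} (hc : E.e α < c) (hiso : ∀ β ∈ D, β < α → c ≤ E.e β) :
    E.e α ∉ derivedSet (E.e '' D) := by
  intro hmem
  rw [mem_derivedSet, accPt_iff_nhds] at hmem
  -- choose lower bound d
  obtain ⟨d, hd, hdall⟩ : ∃ d : ℝ, d < E.e α ∧ ∀ β ∈ D, α < β → E.e β ≤ d := by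
    by_cases hne : (D ∩ Set.Ioi α).Nonempty
    · set δ := sInf (D ∩ Set.Ioi α) with hδ
      have hδmem : δ ∈ D ∩ Set.Ioi α := csInf_mem hne
      have hδω : δ ≤ wOmega := hD hδmem.1
      refine ⟨E.e δ, (E.anti (hD hα) hδω).1 hδmem.2, fun β hβ hαβ => ?_⟩
      exact E_le E (csInf_le (OrderBot.bddBelow _) ⟨hβ, hαβ⟩) (hD hβ)
    · exact ⟨E.e α - 1, by linarith, fun β hβ hαβ => absurd ⟨hβ, hαβ⟩
        (fun hc => hne ⟨β, hc⟩)⟩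
  obtain ⟨y, ⟨hyU, hyD⟩, hyne⟩ := hmem (Set.Ioo d c) (Ioo_mem_nhds hd hc)
  obtain ⟨β, hβD, rfl⟩ := hyD
  rcases lt_trichotomy β α with h' | rfl | h'
  · exact absurd (hiso β hβD h') (not_le.2 hyU.2)
  · exact hyne rfl
  · exact absurd (hdall β hβD h') (not_le.2 hyU.1)


-- ============ more ordinal lemmas ============
lemma wOmega_isLimit : Order.IsSuccLimit wOmega := isSuccLimit_opow one_lt_omega0 isSuccLimit_omega0
lemma wOmega_pos : 0 < wOmega := wOmega_isLimit.bot_lt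
lemma omega0_le_wOmega : omega0 ≤ wOmega := by
  conv_lhs => rw [← opow_one omega0]
  exact opow_le_opow_right omega0_pos one_lt_omega0.le
lemma opow_mul_wOmega (u : ℕ) : omega0 ^ (u : Ordinal) * wOmega = wOmega := by
  rw [wOmega, ← opow_add, add_omega0 (nat_lt_omega0 u)]
lemma omega0_mul_wOmega : omega0 * wOmega = wOmega := by
  rw [wOmega, ← opow_one_add, one_add_omega0]
lemma succ_lt_wOmega {α : Ordinal} (h : α < wOmega) : α + 1 < wOmega := by
  rw [add_one_eq_succ]; exact wOmega_isLimit.succ_lt h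
lemma opow_mul_lt_wOmega {β : Ordinal} (u : ℕ) (h : β < wOmega) :
    omega0 ^ (u : Ordinal) * (β + 1) < wOmega := by
  conv_rhs => rw [← opow_mul_wOmega u]
  exact (mul_lt_mul_iff_right₀ (opow_pos _ omega0_pos)).2 (succ_lt_wOmega h)
lemma opow_succ_nat (u : ℕ) :
    omega0 ^ ((u + 1 : ℕ) : Ordinal) = omega0 ^ (u : Ordinal) * omega0 := by
  push_cast
  rw [opow_add, opow_one]
lemma mul_left_cancel' {a b c : Ordinal} (ha : 0 < a) (h : a * b = a * c) : b = c :=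
  le_antisymm ((mul_le_mul_iff_right₀ ha).1 h.le) ((mul_le_mul_iff_right₀ ha).1 h.ge)
lemma not_omega0_dvd_succ (β : Ordinal) : ¬ omega0 ∣ β + 1 := by
  rintro ⟨d, hd⟩
  have hd0 : d ≠ 0 := by rintro rfl; rw [mul_zero] at hd; exact (succ_ne_zero β) (by
    rwa [add_one_eq_succ] at hd)
  have hlim : Order.IsSuccLimit (omega0 * d) :=
    isSuccLimit_mul_left isSuccLimit_omega0 (pos_iff_ne_zero.2 hd0)
  rw [← hd, add_one_eq_succ] at hlim
  exact (lt_irrefl _ (hlim.succ_lt (Order.lt_succ β))).elim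
/-- decompose an ordinal not divisible by ω and ≥ ω... general: γ ≠ 0, ¬ ω ∣ γ -/
lemma decomp_not_dvd {γ : Ordinal} (h : ¬ omega0 ∣ γ) :
    ∃ (q : Ordinal) (m : ℕ), γ = (omega0 * q + m) + 1 := by
  have hr : γ % omega0 ≠ 0 := fun hc => h (dvd_iff_mod_eq_zero.2 hc)
  obtain ⟨n, hn⟩ := lt_omega0.1 (mod_lt γ omega0_ne_zero)
  have hn0 : n ≠ 0 := by rintro rfl; simp at hn; exact hr hn
  obtain ⟨m, rfl⟩ := Nat.exists_eq_succ_of_ne_zero hn0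
  refine ⟨γ / omega0, m, ?_⟩
  conv_lhs => rw [← div_add_mod γ omega0]
  rw [hn, add_assoc]
  push_cast
  ring_nf

-- ============ Dset and the derived set computation ============
def Dset (u : ℕ) : Set Ordinal.{0} :=
  {α | α ≤ wOmega ∧ omega0 ^ (u : Ordinal) ∣ α ∧ (α ≠ 0 ∨ u = 0)}

lemma Dset_subset (u : ℕ) : Dset u ⊆ Set.Iic wOmega := fun _ hα => hα.1

lemma Dset_zero : Dset 0 = Set.Iic wOmega := by
  ext α
  simp [Dset, Set.mem_Iic]

include hK in
lemma iterDeriv_isClosed : ∀ u : ℕ, IsClosed (iterDeriv K u) := by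
  intro u
  induction u with
  | zero => simpa [iterDeriv] using hK.isClosed
  | succ n ih =>
    rw [iterDeriv, Function.iterate_succ_apply']
    exact isClosed_derivedSet _

include hK hK0 in
lemma iter_eq : ∀ u : ℕ, iterDeriv K u = E.e '' Dset u := by
  intro u
  induction u with
  | zero => rw [Dset_zero, ← K_eq E]; simp [iterDeriv]
  | succ u ih =>
    have hstep : iterDeriv K (u + 1) = derivedSet (iterDeriv K u) := by
      rw [iterDeriv, iterDeriv, Function.iterate_succ_apply']
    rw [hstep, ih]
    apply Set.Subset.antisymm
    · -- derivedSet (E.e '' Dset u) ⊆ E.e '' Dset (u+1)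
      intro x hx
      have hxm : x ∈ E.e '' Dset u := by
        rw [← ih]
        exact (iterDeriv_isClosed hK u).closure_subset
          ((derivedSet_subset_closure _) (by rwa [ih]))
      obtain ⟨α, hα, rfl⟩ := hxm
      obtain ⟨hαω, ⟨γ, hγ⟩, hα0⟩ := hα
      by_contra hnot
      apply absurd hx
      rcases eq_or_ne α 0 with rfl | hαne
      · exact not_mem_derivedSet E (Dset_subset u) ⟨hαω, ⟨γ, hγ⟩, hα0⟩
          (lt_add_one (E.e 0)) (fun β _ hβ => absurd hβ (not_lt_of_ge zero_le))
      · have hγ0 : γ ≠ 0 := by rintro rfl; rw [mul_zero] at hγ; exact hαne hγ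
        have hndvd : ¬ omega0 ∣ γ := by
          rintro ⟨d, rfl⟩
          exact hnot ⟨α, ⟨hαω, ⟨d, by rw [hγ, opow_succ_nat, mul_assoc]⟩, Or.inl hαne⟩, rfl⟩
        obtain ⟨q, m, hqm⟩ := decomp_not_dvd hndvd
        set b := omega0 ^ (u : Ordinal) * (omega0 * q + m) with hb
        have hbα : b < α := by
          rw [hγ, hqm]
          exact (mul_lt_mul_iff_right₀ (opow_pos _ omega0_pos)).2 (lt_add_one _)
        have hbω : b ≤ wOmega := (hbα.le).trans hαω
        refine not_mem_derivedSet E (Dset_subset u) ⟨hαω, ⟨γ, hγ⟩, hα0⟩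
          ((E.anti hbω hαω).1 hbα) ?_
        rintro β ⟨hβω, ⟨ξ, rfl⟩, -⟩ hβα
        have hξγ : ξ < γ := by
          rw [hγ] at hβα
          exact (mul_lt_mul_iff_right₀ (opow_pos _ omega0_pos)).1 hβα
        have hξ : ξ ≤ omega0 * q + m := by
          rw [hqm, add_one_eq_succ, Order.lt_succ_iff] at hξγ
          exact hξγ
        exact E_le E (mul_le_mul_right hξ _) hbω
    · -- E.e '' Dset (u+1) ⊆ derivedSet (E.e '' Dset u)
      rintro x ⟨α, ⟨hαω, ⟨γ, hγ⟩, hα0⟩, rfl⟩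
      have hαne : α ≠ 0 := hα0.resolve_right (by omega)
      have hγ0 : γ ≠ 0 := by rintro rfl; rw [mul_zero] at hγ; exact hαne hγ
      have hγpos : 0 < γ := pos_iff_ne_zero.2 hγ0
      have hα' : α = omega0 ^ (u : Ordinal) * (omega0 * γ) := by
        rw [hγ, opow_succ_nat, mul_assoc]
      have hlim : Order.IsSuccLimit (omega0 * γ) := isSuccLimit_mul_left isSuccLimit_omega0 hγpos
      apply mem_derivedSet_of_cof hK hK0 E (Dset_subset u) hαω
        (pos_iff_ne_zero.2 hαne)
      intro b hb
      set q := b / omega0 ^ (u : Ordinal) with hq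
      have hop : omega0 ^ (u : Ordinal) ≠ 0 := (opow_pos _ omega0_pos).ne'
      have hqlt : q < omega0 * γ := by
        rw [hq, div_lt hop, ← hα']
        exact hb
      have hq1 : q + 1 < omega0 * γ := by
        rw [add_one_eq_succ]; exact hlim.succ_lt hqlt
      refine ⟨omega0 ^ (u : Ordinal) * (q + 1), ⟨?_, ⟨q + 1, rfl⟩, Or.inl ?_⟩, ?_, ?_⟩
      · refine le_trans ?_ hαω
        rw [hα']
        exact ((mul_lt_mul_iff_right₀ (opow_pos _ omega0_pos)).2 hq1).le
      · exact mul_ne_zero hop (by rw [add_one_eq_succ]; exact (succ_ne_zero q))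
      · have := lt_mul_succ_div b hop
        rwa [← add_one_eq_succ] at this
      · rw [hα']
        exact (mul_lt_mul_iff_right₀ (opow_pos _ omega0_pos)).2 hq1


-- ============ convergence along cofinal monotone sequences ============
include hK hK0 in
lemma tendsto_E {s : ℕ → Ordinal.{0}} {l : Ordinal} (hmono : Monotone s)
    (hlt : ∀ n, s n < l) (hl : l ≤ wOmega)
    (hcof : ∀ b < l, ∃ n, b < s n) :
    Tendsto (fun n => E.e (s n)) atTop (𝓝 (E.e l)) := by
  rw [Metric.tendsto_atTop]
  intro ε hε
  have hl0 : 0 < l := zero_le.trans_lt (hlt 0)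
  have hcof' : ∀ b < l, ∃ β ∈ Set.range s, b < β ∧ β < l := fun b hb => by
    obtain ⟨n, hn⟩ := hcof b hb; exact ⟨s n, ⟨n, rfl⟩, hn, hlt n⟩
  have hD : Set.range s ⊆ Set.Iic wOmega := by rintro _ ⟨n, rfl⟩; exact (hlt n).le.trans hl
  obtain ⟨β, ⟨N, rfl⟩, hβl, hβe⟩ := exists_lt_add hK hK0 E hD hl hl0 hcof' hε
  refine ⟨N, fun n hn => ?_⟩
  have h1 : E.e (s n) ≤ E.e (s N) := E_le E (hmono hn) ((hlt n).le.trans hl)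
  have h2 : E.e l < E.e (s n) := (E.anti ((hlt n).le.trans hl) hl).1 (hlt n)
  rw [Real.dist_eq, abs_lt]
  constructor <;> linarith

-- ============ uniqueness of order-reversing enumerations ============
omit hK hK0 E in
lemma enum_unique {Λ : Ordinal.{0}} {f g : Ordinal.{0} → ℝ}
    (hf : ∀ ⦃a b⦄, a < Λ → b < Λ → (a < b ↔ f b < f a))
    (hg : ∀ ⦃a b⦄, a < Λ → b < Λ → (a < b ↔ g b < g a))
    (hfg : ∀ a, a < Λ → ∃ b, b < Λ ∧ g b = f a)
    (hgf : ∀ a, a < Λ → ∃ b, b < Λ ∧ f b = g a) :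
    ∀ a, a < Λ → f a = g a := by
  intro a
  induction a using Ordinal.induction with
  | h a IH =>
  intro ha
  obtain ⟨b, hb, hba⟩ := hfg a ha
  rcases lt_trichotomy b a with h' | rfl | h'
  · exfalso
    rw [← IH b h' hb] at hba
    exact absurd ((hf hb ha).1 h') (by rw [hba]; exact lt_irrefl _)
  · exact hba.symm
  · exfalso
    have hfa : f a < g a := by
      have := (hg ha hb).1 h'
      rwa [hba] at this
    obtain ⟨c, hc, hca⟩ := hgf a ha
    rcases lt_trichotomy c a with h2 | rfl | h2
    · rw [IH c h2 hc] at hca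
      exact absurd ((hg hc ha).1 h2) (by rw [hca]; exact lt_irrefl _)
    · rw [hca] at hfa; exact lt_irrefl _ hfa
    · have := (hf ha hc).1 h2
      rw [hca] at this
      exact absurd (this.trans hfa) (lt_irrefl _)

-- ============ phi : explicit enumeration of Dset u \ Dset (u+1) ============
noncomputable def phi (u : ℕ) (β : Ordinal.{0}) : Ordinal.{0} :=
  if u = 0 ∧ β < omega0 then β else omega0 ^ (u : Ordinal) * (β + 1)

omit E in
lemma phi_lt_wOmega {u : ℕ} {β : Ordinal} (h : β < wOmega) : phi u β < wOmega := by
  unfold phi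
  split
  · exact h
  · exact opow_mul_lt_wOmega u h

omit E in
lemma phi_strictMono (u : ℕ) : StrictMono (phi u) := by
  intro β β' h
  unfold phi
  split <;> rename_i h1
  · split <;> rename_i h2
    · exact h
    · have hu : u = 0 := h1.1
      have : ¬ β' < omega0 := fun hc => h2 ⟨hu, hc⟩
      calc β < omega0 := h1.2
        _ ≤ β' + 1 := (not_lt.1 this).trans (lt_add_one β').le
        _ ≤ omega0 ^ (u : Ordinal) * (β' + 1) := Ordinal.le_mul_right _ (opow_pos _ omega0_pos)
  · split <;> rename_i h2
    · exact absurd ⟨h2.1, h.trans h2.2⟩ h1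
    · exact (mul_lt_mul_iff_right₀ (opow_pos _ omega0_pos)).2 (by
        rw [add_one_eq_succ, add_one_eq_succ]; exact Order.succ_lt_succ h)

omit E in
lemma phi_mem {u : ℕ} {β : Ordinal} (h : β < wOmega) :
    phi u β ∈ Dset u \ Dset (u + 1) := by
  unfold phi
  split <;> rename_i h1
  · obtain ⟨hu, hβ⟩ := h1
    subst hu
    constructor
    · exact ⟨h.le, by simp, Or.inr rfl⟩
    · rintro ⟨-, hdvd, h0⟩
      have h0' : β ≠ 0 := h0.resolve_right (by omega)
      have : omega0 ≤ β := le_of_dvd h0' (by simpa using hdvd)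
      exact absurd hβ (not_lt.2 this)
  · have hne : omega0 ^ (u : Ordinal) * (β + 1) ≠ 0 :=
      mul_ne_zero (opow_pos _ omega0_pos).ne' (by
        rw [add_one_eq_succ]; exact succ_ne_zero β)
    constructor
    · exact ⟨(opow_mul_lt_wOmega u h).le, ⟨β + 1, rfl⟩, Or.inl hne⟩
    · rintro ⟨-, ⟨d, hd⟩, -⟩
      rw [opow_succ_nat, mul_assoc] at hd
      have := mul_left_cancel' (opow_pos (u : Ordinal) omega0_pos) hd
      exact not_omega0_dvd_succ β ⟨d, this⟩

omit E in
lemma phi_surj {u : ℕ} {x : Ordinal} (hx : x ∈ Dset u \ Dset (u + 1)) :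
    ∃ β, β < wOmega ∧ phi u β = x := by
  obtain ⟨⟨hxω, ⟨γ, rfl⟩, h0⟩, hnot⟩ := hx
  have hγω : γ ≤ wOmega := le_trans (Ordinal.le_mul_right γ (opow_pos _ omega0_pos)) hxω
  rcases eq_or_ne u 0 with rfl | hu
  · simp only [Nat.cast_zero, opow_zero, one_mul] at hxω h0 hnot ⊢
    rcases lt_or_ge γ omega0 with hγ | hγ
    · exact ⟨γ, hγ.trans_le omega0_le_wOmega, by unfold phi; simp [hγ]⟩
    · have hγ0 : γ ≠ 0 := by rintro rfl; exact absurd (omega0_pos.trans_le hγ) (lt_irrefl 0)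
      have hndvd : ¬ omega0 ∣ γ := by
        intro hdvd
        exact hnot ⟨hxω, by simpa using hdvd, Or.inl hγ0⟩
      obtain ⟨q, m, hqm⟩ := decomp_not_dvd hndvd
      refine ⟨omega0 * q + m, ?_, ?_⟩
      · exact lt_of_lt_of_le (by rw [hqm]; exact lt_add_one _) hγω
      · have hnlt : ¬ (omega0 * q + (m : Ordinal) < omega0) := by
          intro hc
          have hq0 : q = 0 := by
            by_contra hq0
            have : omega0 ≤ omega0 * q := Ordinal.le_mul_left omega0 (pos_iff_ne_zero.2 hq0)
            exact absurd (lt_of_le_of_lt (this.trans (le_self_add)) hc) (lt_irrefl _)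
          rw [hq0, mul_zero, zero_add] at hc
          rw [hqm, hq0, mul_zero, zero_add] at hγ
          have : ((m : Ordinal) + 1) < omega0 := by
            simpa using nat_lt_omega0 (m + 1)
          exact absurd hγ (not_le.2 this)
        unfold phi
        rw [if_neg (fun hc => hnlt hc.2), Nat.cast_zero, opow_zero, one_mul, hqm]
  · have hx0 : omega0 ^ (u : Ordinal) * γ ≠ 0 := h0.resolve_right hu
    have hγ0 : γ ≠ 0 := by rintro rfl; rw [mul_zero] at hx0; exact hx0 rfl
    have hndvd : ¬ omega0 ∣ γ := by
      rintro ⟨d, rfl⟩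
      exact hnot ⟨hxω, ⟨d, by rw [opow_succ_nat, mul_assoc]⟩, Or.inl hx0⟩
    obtain ⟨q, m, hqm⟩ := decomp_not_dvd hndvd
    refine ⟨omega0 * q + m, ?_, ?_⟩
    · exact lt_of_lt_of_le (by rw [hqm]; exact lt_add_one _) hγω
    · unfold phi
      rw [if_neg (fun hc => hu hc.1), hqm]

-- ============ identification of the sections and their enumerations ============
include hK hK0 in
lemma subenum_eq {S : Set ℝ} (ES : SubEnum S) (u : ℕ)
    (hS : S = E.e '' (Dset u \ Dset (u + 1))) :
    ∀ β < wOmega, ES.e β = E.e (phi u β) := by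
  subst hS
  have hg : ∀ ⦃a b : Ordinal⦄, a < wOmega → b < wOmega →
      (a < b ↔ E.e (phi u b) < E.e (phi u a)) := by
    intro a b ha hb
    rw [← E.anti (phi_lt_wOmega ha).le (phi_lt_wOmega hb).le]
    exact ⟨fun h => phi_strictMono u h, fun h => (phi_strictMono u).lt_iff_lt.1 h⟩
  intro β hβ
  refine enum_unique (Λ := wOmega) (f := ES.e) (g := fun δ => E.e (phi u δ))
    ES.anti hg ?_ ?_ β hβ
  · intro a ha
    obtain ⟨α, hα, hαe⟩ := ES.mem a ha
    obtain ⟨b, hb, hbe⟩ := phi_surj hα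
    exact ⟨b, hb, show E.e (phi u b) = ES.e a by rw [hbe, hαe]⟩
  · intro a ha
    obtain ⟨b, hb, hbe⟩ := ES.surj _ ⟨phi u a, phi_mem ha, rfl⟩
    exact ⟨b, hb, hbe⟩

include hK hK0 in
lemma rho_id {ρ : ℝ} {μ : ℕ} (hρ : 1 < ρ) (hμ : 1 ≤ μ)
    (hss : (fun x => ρ * x) '' iterDeriv K μ = K) :
    ∀ δ ≤ wOmega, E.e δ = ρ * E.e (omega0 ^ (μ : Ordinal) * (1 + δ)) := by
  have hρ0 : (0 : ℝ) < ρ := lt_trans zero_lt_one hρ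
  have hμ0 : μ ≠ 0 := by omega
  have hmem : ∀ δ ≤ wOmega, omega0 ^ (μ : Ordinal) * (1 + δ) ∈ Dset μ := by
    intro δ hδ
    have h1δ : 1 + δ ≤ wOmega := by
      calc 1 + δ ≤ 1 + wOmega := add_le_add_right hδ 1
        _ = wOmega := one_add_of_omega0_le omega0_le_wOmega
    refine ⟨?_, ⟨1 + δ, rfl⟩, Or.inl ?_⟩
    · calc omega0 ^ (μ : Ordinal) * (1 + δ) ≤ omega0 ^ (μ : Ordinal) * wOmega :=
        mul_le_mul_right h1δ _
        _ = wOmega := opow_mul_wOmega μ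
    · refine mul_ne_zero (opow_pos _ omega0_pos).ne' ?_
      intro hc
      have : (1 : Ordinal) ≤ 1 + δ := le_self_add
      rw [hc] at this
      exact absurd this (by simp)
  have hKmem : ∀ z : ℝ, z ∈ (fun x => ρ * x) '' iterDeriv K μ ↔ z ∈ K := fun z => by
    rw [hss]
  have hmw : ∀ δ ≤ wOmega, omega0 ^ (μ : Ordinal) * (1 + δ) ≤ wOmega :=
    fun δ hδ => (hmem δ hδ).1
  have key : ∀ a, a < wOmega + 1 → E.e a = ρ * E.e (omega0 ^ (μ : Ordinal) * (1 + a)) := by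
    have hlt : ∀ {a : Ordinal}, a < wOmega + 1 ↔ a ≤ wOmega := by
      intro a; rw [add_one_eq_succ, Order.lt_succ_iff]
    refine enum_unique (Λ := wOmega + 1) (f := E.e)
      (g := fun δ => ρ * E.e (omega0 ^ (μ : Ordinal) * (1 + δ))) ?_ ?_ ?_ ?_
    · intro a b ha hb
      exact E.anti (hlt.1 ha) (hlt.1 hb)
    · intro a b ha hb
      rw [mul_lt_mul_iff_right₀ hρ0]
      rw [← E.anti (hmw a (hlt.1 ha)) (hmw b (hlt.1 hb))]
      rw [mul_lt_mul_iff_right₀ (opow_pos _ omega0_pos), add_lt_add_iff_left]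
    · -- for each a, find b with ρ * E.e (ω^μ * (1+b)) = E.e a
      intro a ha
      obtain ⟨y, hy, hye⟩ := (hKmem _).2 (E.mem a (hlt.1 ha))
      rw [iter_eq hK hK0 E μ] at hy
      obtain ⟨α, ⟨hαω, ⟨γ, rfl⟩, h0⟩, rfl⟩ := hy
      have hx0 : omega0 ^ (μ : Ordinal) * γ ≠ 0 := h0.resolve_right hμ0
      have hγ0 : γ ≠ 0 := by rintro rfl; rw [mul_zero] at hx0; exact hx0 rfl
      refine ⟨γ - 1, ?_, ?_⟩
      · rw [hlt]
        calc γ - 1 ≤ γ := sub_le_self γ 1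
          _ ≤ omega0 ^ (μ : Ordinal) * γ := Ordinal.le_mul_right γ (opow_pos _ omega0_pos)
          _ ≤ wOmega := hαω
      · show ρ * E.e (omega0 ^ (μ : Ordinal) * (1 + (γ - 1))) = E.e a
        rw [Ordinal.add_sub_cancel_of_le (Ordinal.one_le_iff_ne_zero.2 hγ0)]
        exact hye
    · intro a ha
      have : ρ * E.e (omega0 ^ (μ : Ordinal) * (1 + a)) ∈ K := by
        apply (hKmem _).1
        refine ⟨E.e (omega0 ^ (μ : Ordinal) * (1 + a)), ?_, rfl⟩
        rw [iter_eq hK hK0 E μ]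
        exact ⟨_, hmem a (hlt.1 ha), rfl⟩
      obtain ⟨b, hb, hbe⟩ := E.surj _ this
      exact ⟨b, hlt.2 hb, hbe⟩
  intro δ hδ
  exact key δ (by rw [add_one_eq_succ, Order.lt_succ_iff]; exact hδ)

end SSP

theorem tendsto_section_limit (K : Set ℝ) (ρ : ℝ) (μ : ℕ)
    (h : SelfSimilar K ρ μ) (T : ℕ → Set ℝ)
    (hT : ∀ u, T u = iterDeriv K u \ iterDeriv K (u + 1))
    (u : ℕ) (Eu : SubEnum (T u)) (Ev : SubEnum (T (u + 1))) (E0 : SubEnum (T 0))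
    (α : Ordinal.{0}) (hα : α < wOmega) :
    Tendsto (fun n : ℕ => Eu.e (Ordinal.omega0 * α + n)) atTop (𝓝 (Ev.e α)) ∧
    (u = μ - 1 →
      Tendsto (fun n : ℕ => Eu.e (Ordinal.omega0 * α + n)) atTop (𝓝 (E0.e α / ρ))) := by
  obtain ⟨hK, hK0, hρ, hμ, hss, ⟨E⟩⟩ := h
  have hρ0 : (0 : ℝ) < ρ := lt_trans zero_lt_one hρ
  have hTeq : ∀ w : ℕ, T w = E.e '' (SSP.Dset w \ SSP.Dset (w + 1)) := by
    intro w
    rw [hT w, SSP.iter_eq hK hK0 E w, SSP.iter_eq hK hK0 E (w + 1)]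
    ext x
    constructor
    · rintro ⟨⟨a, ha, rfl⟩, hx⟩
      exact ⟨a, ⟨ha, fun hc => hx ⟨a, hc, rfl⟩⟩, rfl⟩
    · rintro ⟨a, ⟨ha, ha'⟩, rfl⟩
      refine ⟨⟨a, ha, rfl⟩, ?_⟩
      rintro ⟨b, hb, hbe⟩
      exact ha' ((SSP.E_inj E (SSP.Dset_subset _ hb) (SSP.Dset_subset _ ha) hbe) ▸ hb)
  have hEu : ∀ β < wOmega, Eu.e β = E.e (SSP.phi u β) :=
    SSP.subenum_eq hK hK0 E Eu u (hTeq u)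
  have hEv : ∀ β < wOmega, Ev.e β = E.e (SSP.phi (u + 1) β) :=
    SSP.subenum_eq hK hK0 E Ev (u + 1) (hTeq (u + 1))
  have hE0 : ∀ β < wOmega, E0.e β = E.e (SSP.phi 0 β) :=
    SSP.subenum_eq hK hK0 E E0 0 (hTeq 0)
  set l : Ordinal := Ordinal.omega0 ^ ((u + 1 : ℕ) : Ordinal) * (α + 1) with hl
  have hphiv : SSP.phi (u + 1) α = l := by
    unfold SSP.phi
    rw [if_neg (by simp)]
  have hl_lt : l < wOmega := hl ▸ SSP.opow_mul_lt_wOmega (u + 1) hα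
  have hαn : ∀ n : ℕ, Ordinal.omega0 * α + (n : Ordinal) < wOmega := by
    intro n
    calc Ordinal.omega0 * α + (n : Ordinal)
        < Ordinal.omega0 * α + Ordinal.omega0 := add_lt_add_right (nat_lt_omega0 n) _
      _ = Ordinal.omega0 * (α + 1) := by rw [add_one_eq_succ, mul_succ]
      _ ≤ Ordinal.omega0 * wOmega := mul_le_mul_right (SSP.succ_lt_wOmega hα).le _
      _ = wOmega := SSP.omega0_mul_wOmega
  have hl_eq : l = Ordinal.omega0 ^ (u : Ordinal) * (Ordinal.omega0 * α + Ordinal.omega0) := by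
    rw [hl, SSP.opow_succ_nat, mul_assoc, add_one_eq_succ, mul_succ]
  have hphin : ∀ x : Ordinal, ¬ (u = 0 ∧ Ordinal.omega0 * α + x < Ordinal.omega0) →
      SSP.phi u (Ordinal.omega0 * α + x) =
        Ordinal.omega0 ^ (u : Ordinal) * (Ordinal.omega0 * α + x + 1) := by
    intro x hx
    unfold SSP.phi
    rw [if_neg hx]
  have hcond : ∀ x : Ordinal, (u = 0 ∧ α = 0) ∨
      ¬ (u = 0 ∧ Ordinal.omega0 * α + x < Ordinal.omega0) := by
    intro x
    by_cases hc : u = 0 ∧ α = 0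
    · exact Or.inl hc
    · refine Or.inr ?_
      rintro ⟨rfl, hx⟩
      have hα0 : α ≠ 0 := fun hh => hc ⟨rfl, hh⟩
      have h1 : Ordinal.omega0 ≤ Ordinal.omega0 * α :=
        Ordinal.le_mul_left _ (pos_iff_ne_zero.2 hα0)
      exact absurd hx (not_lt.2 (h1.trans (le_self_add)))
  have key : Tendsto (fun n : ℕ => E.e (SSP.phi u (Ordinal.omega0 * α + (n : Ordinal))))
      atTop (𝓝 (E.e l)) := by
    apply SSP.tendsto_E hK hK0 E
    · exact fun n m hnm =>
        (SSP.phi_strictMono u).monotone (add_le_add_right (Nat.cast_le.2 hnm) _)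
    · intro n
      by_cases hc : u = 0 ∧ α = 0
      · obtain ⟨rfl, rfl⟩ := hc
        unfold SSP.phi
        rw [if_pos ⟨rfl, by simpa using nat_lt_omega0 n⟩, hl]
        simpa using nat_lt_omega0 n
      · rw [hphin _ ((hcond _).resolve_left hc), hl_eq]
        apply (mul_lt_mul_iff_right₀ (opow_pos _ omega0_pos)).2
        rw [add_assoc]
        apply add_lt_add_right
        exact_mod_cast nat_lt_omega0 (n + 1)
    · exact hl_lt.le
    · intro b hb
      by_cases hc : u = 0 ∧ α = 0
      · obtain ⟨rfl, rfl⟩ := hc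
        rw [hl] at hb
        have hbω : b < Ordinal.omega0 := by simpa using hb
        obtain ⟨m, rfl⟩ := lt_omega0.1 hbω
        refine ⟨m + 1, ?_⟩
        unfold SSP.phi
        rw [if_pos ⟨rfl, by simpa using nat_lt_omega0 (m + 1)⟩]
        have hmm : ((m : Ordinal.{0})) < ((m + 1 : ℕ) : Ordinal.{0}) := by
          exact_mod_cast Nat.lt_succ_self m
        simpa using hmm
      · have hop : Ordinal.omega0 ^ (u : Ordinal) ≠ 0 := (opow_pos _ omega0_pos).ne'
        set q := b / Ordinal.omega0 ^ (u : Ordinal) with hq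
        have hqlt : q < Ordinal.omega0 * α + Ordinal.omega0 := by
          rw [hq, Ordinal.div_lt hop, ← hl_eq]
          exact hb
        have hbq : b < Ordinal.omega0 ^ (u : Ordinal) * (q + 1) := by
          have := Ordinal.lt_mul_succ_div b hop
          rwa [← add_one_eq_succ] at this
        rcases lt_or_ge q (Ordinal.omega0 * α) with hq1 | hq1
        · refine ⟨0, ?_⟩
          have hpos : (0 : Ordinal) < Ordinal.omega0 * α := zero_le.trans_lt hq1
          have hα0 : α ≠ 0 := by rintro rfl; simp at hpos
          have hlim : Order.IsSuccLimit (Ordinal.omega0 * α) :=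
            isSuccLimit_mul_left isSuccLimit_omega0 (pos_iff_ne_zero.2 hα0)
          have h2 : q + 1 < Ordinal.omega0 * α := by
            rw [add_one_eq_succ]; exact hlim.succ_lt hq1
          rw [hphin _ ((hcond _).resolve_left hc)]
          calc b < Ordinal.omega0 ^ (u : Ordinal) * (q + 1) := hbq
            _ ≤ Ordinal.omega0 ^ (u : Ordinal) * (Ordinal.omega0 * α) :=
              mul_le_mul_right h2.le _
            _ ≤ Ordinal.omega0 ^ (u : Ordinal) * (Ordinal.omega0 * α + (0 : ℕ) + 1) := by
              apply mul_le_mul_right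
              rw [Nat.cast_zero, add_zero]
              exact le_self_add
        · obtain ⟨c, hc2⟩ : ∃ c, q = Ordinal.omega0 * α + c :=
            ⟨q - Ordinal.omega0 * α, (Ordinal.add_sub_cancel_of_le hq1).symm⟩
          have hcω : c < Ordinal.omega0 := by
            rw [hc2] at hqlt
            exact (add_lt_add_iff_left _).1 hqlt
          obtain ⟨m, rfl⟩ := lt_omega0.1 hcω
          refine ⟨m + 1, ?_⟩
          rw [hphin _ ((hcond _).resolve_left hc)]
          calc b < Ordinal.omega0 ^ (u : Ordinal) * (q + 1) := hbq
            _ ≤ Ordinal.omega0 ^ (u : Ordinal) *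
                (Ordinal.omega0 * α + ((m + 1 : ℕ) : Ordinal) + 1) := by
              apply mul_le_mul_right
              rw [hc2, add_assoc, add_assoc]
              apply add_le_add_right
              exact_mod_cast Nat.le_succ (m + 1)
  have keyu : Tendsto (fun n : ℕ => Eu.e (Ordinal.omega0 * α + (n : Ordinal)))
      atTop (𝓝 (E.e l)) :=
    key.congr fun n => (hEu _ (hαn n)).symm
  constructor
  · rw [hEv α hα, hphiv]
    exact keyu
  · intro humu
    have hμu : μ = u + 1 := by omega
    have hphi0 : 1 + SSP.phi 0 α = α + 1 := by
      rcases lt_or_ge α Ordinal.omega0 with hlt0 | hge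
      · have hp : SSP.phi 0 α = α := by
          unfold SSP.phi
          rw [if_pos ⟨rfl, hlt0⟩]
        rw [hp]
        obtain ⟨m, rfl⟩ := lt_omega0.1 hlt0
        exact_mod_cast congrArg (Nat.cast : ℕ → Ordinal.{0}) (Nat.add_comm 1 m)
      · have hp : SSP.phi 0 α = α + 1 := by
          unfold SSP.phi
          rw [if_neg (fun hcc => absurd hcc.2 (not_lt.2 hge))]
          simp
        rw [hp, ← add_assoc, one_add_of_omega0_le hge]
    have h1 : E0.e α = ρ * E.e l := by
      rw [hE0 α hα, SSP.rho_id hK hK0 E hρ hμ hss _ (SSP.phi_lt_wOmega hα).le]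
      congr 2
      rw [hphi0, hμu, hl]
    have h3 : E0.e α / ρ = E.e l := by
      rw [h1, mul_div_cancel_left₀ _ (ne_of_gt hρ0)]
    rw [h3]
    exact keyu
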